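/- For any matrices G_0, ..., G_{T-1} ∈ R^{m×n}, it holds that tr( (Σ_{t=0}^{T-1} G_t G_tᵀ)^{1/2} ) ≤ tr( (Σ_{t=0}^{T-1} G_t G_tᵀ)^{1/4} ) · tr( (Σ_{t=0}^{T-1} G_tᵀ G_t)^{1/4} ); i.e., the proven ASGO bound is never worse than the Shampoo bound (up to the diameter and rank factors). -/

import Mathlib

open Matrix
open scoped Classical

/-- The positive semidefinite square root of a positive semidefinite real matrix
(junk value `0` if the matrix is not positive semidefinite). -/
noncomputable def psdSqrt {k : ℕ} (X : Matrix (Fin k) (Fin k) ℝ) : Matrix (Fin k) (Fin k) ℝ :=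
  if h : X.PosSemidef then
    h.1.eigenvectorUnitary.1 * diagonal (Real.sqrt ∘ h.1.eigenvalues) *
      (star h.1.eigenvectorUnitary : Matrix (Fin k) (Fin k) ℝ)
  else 0

/-- The positive semidefinite fourth root `X^{1/4} = (X^{1/2})^{1/2}`. -/
noncomputable def psdFourthRoot {k : ℕ} (X : Matrix (Fin k) (Fin k) ℝ) :
    Matrix (Fin k) (Fin k) ℝ :=
  psdSqrt (psdSqrt X)

namespace Stmt14Aux

variable {k : ℕ}

lemma trace_conj (U : Matrix.unitaryGroup (Fin k) ℝ) (d : Fin k → ℝ) :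
    ((U : Matrix (Fin k) (Fin k) ℝ) * diagonal d * star (U : Matrix (Fin k) (Fin k) ℝ)).trace
      = ∑ i, d i := by
  rw [trace_mul_cycle, (Unitary.mem_iff.mp U.2).1, one_mul, trace_diagonal]

lemma trace_eq_sum {A : Matrix (Fin k) (Fin k) ℝ} (hA : A.PosSemidef) :
    A.trace = ∑ i, hA.1.eigenvalues i := by
  conv_lhs => rw [hA.1.spectral_theorem, Unitary.conjStarAlgAut_apply]
  rw [trace_conj]
  simp

lemma psdSqrt_of_posSemidef {A : Matrix (Fin k) (Fin k) ℝ} (hA : A.PosSemidef) :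
    psdSqrt A = (hA.1.eigenvectorUnitary : Matrix (Fin k) (Fin k) ℝ) *
      diagonal (Real.sqrt ∘ hA.1.eigenvalues) *
      star (hA.1.eigenvectorUnitary : Matrix (Fin k) (Fin k) ℝ) := dif_pos hA

lemma trace_sqrt {A : Matrix (Fin k) (Fin k) ℝ} (hA : A.PosSemidef) :
    ((hA.1.eigenvectorUnitary : Matrix (Fin k) (Fin k) ℝ) *
      diagonal (Real.sqrt ∘ hA.1.eigenvalues) *
      star (hA.1.eigenvectorUnitary : Matrix (Fin k) (Fin k) ℝ)).trace
      = ∑ i, Real.sqrt (hA.1.eigenvalues i) := by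
  rw [trace_conj]
  simp

lemma fourthRoot_eq {A : Matrix (Fin k) (Fin k) ℝ} (hA : A.PosSemidef) :
    psdSqrt (psdSqrt A) =
      (hA.1.eigenvectorUnitary : Matrix (Fin k) (Fin k) ℝ) *
        diagonal (fun i => Real.sqrt (Real.sqrt (hA.1.eigenvalues i))) *
        star (hA.1.eigenvectorUnitary : Matrix (Fin k) (Fin k) ℝ) := by
  have e : ∀ (B : Matrix (Fin k) (Fin k) ℝ) (hB : B.PosSemidef), psdSqrt B = cfc Real.sqrt B := by
    intro B hB
    rw [hB.1.cfc_eq, IsHermitian.cfc, Unitary.conjStarAlgAut_apply]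
    exact dif_pos hB
  have hpsd : (psdSqrt A).PosSemidef := by
    rw [psdSqrt_of_posSemidef hA, Matrix.star_eq_conjTranspose]
    exact (posSemidef_diagonal_iff.mpr fun i => Real.sqrt_nonneg _).mul_mul_conjTranspose_same _
  have hsa : IsSelfAdjoint A := hA.1
  rw [e _ hpsd, e _ hA, ← cfc_comp Real.sqrt Real.sqrt A hsa, hA.1.cfc_eq, IsHermitian.cfc,
    Unitary.conjStarAlgAut_apply]
  rfl

lemma trace_fourthRoot {A : Matrix (Fin k) (Fin k) ℝ} (hA : A.PosSemidef) :
    (psdFourthRoot A).trace = ∑ i, Real.sqrt (Real.sqrt (hA.1.eigenvalues i)) := by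
  rw [psdFourthRoot, fourthRoot_eq hA]
  exact trace_conj hA.1.eigenvectorUnitary _

lemma sum_pow_four_le {s : Finset (Fin k)} (a : Fin k → ℝ) (ha : ∀ i, 0 ≤ a i) :
    ∑ i ∈ s, (a i) ^ 4 ≤ (∑ i ∈ s, a i) ^ 4 := by
  have hs : 0 ≤ ∑ i ∈ s, a i := Finset.sum_nonneg fun i _ => ha i
  calc ∑ i ∈ s, (a i) ^ 4 ≤ ∑ i ∈ s, a i * (∑ j ∈ s, a j) ^ 3 := by
        refine Finset.sum_le_sum fun i hi => ?_
        have h1 : a i ≤ ∑ j ∈ s, a j := Finset.single_le_sum (fun j _ => ha j) hi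
        calc (a i) ^ 4 = a i * (a i) ^ 3 := by ring
          _ ≤ a i * (∑ j ∈ s, a j) ^ 3 :=
              mul_le_mul_of_nonneg_left (pow_le_pow_left₀ (ha i) h1 3) (ha i)
    _ = (∑ i ∈ s, a i) ^ 4 := by rw [← Finset.sum_mul]; ring
end Stmt14Aux

open Stmt14Aux in
/-- for any matrices `G_0, ..., G_{T-1} ∈ ℝ^{m×n}`,
`tr((∑_t G_t G_tᵀ)^{1/2}) ≤ tr((∑_t G_t G_tᵀ)^{1/4}) · tr((∑_t G_tᵀ G_t)^{1/4})`:
the proven ASGO bound is never worse than the Shampoo bound. -/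
theorem stmt14 (m n T : ℕ) (G : Fin T → Matrix (Fin m) (Fin n) ℝ) :
    (psdSqrt (∑ t, G t * (G t)ᵀ)).trace ≤
      (psdFourthRoot (∑ t, G t * (G t)ᵀ)).trace * (psdFourthRoot (∑ t, (G t)ᵀ * G t)).trace := by
  have hA : (∑ t, G t * (G t)ᵀ).PosSemidef := by
    refine Finset.sum_induction _ _ (fun a b ha hb => ha.add hb) ?_ ?_
    · simpa using Matrix.PosSemidef.zero
    · intro t _
      simpa using posSemidef_self_mul_conjTranspose (G t)
  have hB : (∑ t, (G t)ᵀ * G t).PosSemidef := by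
    refine Finset.sum_induction _ _ (fun a b ha hb => ha.add hb) ?_ ?_
    · simpa using Matrix.PosSemidef.zero
    · intro t _
      simpa using posSemidef_conjTranspose_mul_self (G t)
  set lam := hA.1.eigenvalues with hlam
  set mu := hB.1.eigenvalues with hmu
  have hlam0 : ∀ i, 0 ≤ lam i := hA.eigenvalues_nonneg
  have hmu0 : ∀ j, 0 ≤ mu j := hB.eigenvalues_nonneg
  have htr : ∑ i, lam i = ∑ j, mu j := by
    rw [← trace_eq_sum hA, ← trace_eq_sum hB, Matrix.trace_sum, Matrix.trace_sum]
    exact Finset.sum_congr rfl fun t _ => Matrix.trace_mul_comm _ _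
  set C := ∑ j, Real.sqrt (Real.sqrt (mu j)) with hC
  have hC0 : 0 ≤ C := Finset.sum_nonneg fun j _ => Real.sqrt_nonneg _
  have hmuC : ∑ j, mu j ≤ C ^ 4 := by
    have : ∀ j : Fin n, mu j = (Real.sqrt (Real.sqrt (mu j))) ^ 4 := by
      intro j
      have h1 : (Real.sqrt (Real.sqrt (mu j))) ^ 2 = Real.sqrt (mu j) :=
        Real.sq_sqrt (Real.sqrt_nonneg _)
      have h2 : (Real.sqrt (mu j)) ^ 2 = mu j := Real.sq_sqrt (hmu0 j)
      calc mu j = ((Real.sqrt (Real.sqrt (mu j))) ^ 2) ^ 2 := by rw [h1, h2]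
        _ = _ := by ring
    calc ∑ j, mu j = ∑ j, (Real.sqrt (Real.sqrt (mu j))) ^ 4 :=
          Finset.sum_congr rfl fun j _ => this j
      _ ≤ C ^ 4 := sum_pow_four_le _ fun j => Real.sqrt_nonneg _
  have hkey : ∀ i : Fin m, Real.sqrt (Real.sqrt (lam i)) ≤ C := by
    intro i
    have h1 : lam i ≤ C ^ 4 := by
      calc lam i ≤ ∑ ii, lam ii := Finset.single_le_sum (fun ii _ => hlam0 ii) (Finset.mem_univ i)
        _ = ∑ j, mu j := htr
        _ ≤ C ^ 4 := hmuC
    have h2 : Real.sqrt (C ^ 4) = C ^ 2 := by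
      rw [show (C : ℝ) ^ 4 = (C ^ 2) ^ 2 by ring, Real.sqrt_sq (sq_nonneg C)]
    calc Real.sqrt (Real.sqrt (lam i)) ≤ Real.sqrt (Real.sqrt (C ^ 4)) :=
          Real.sqrt_le_sqrt (Real.sqrt_le_sqrt h1)
      _ = C := by rw [h2, Real.sqrt_sq hC0]
  rw [psdSqrt_of_posSemidef hA, trace_sqrt hA, trace_fourthRoot hA, trace_fourthRoot hB,
    Finset.sum_mul]
  refine Finset.sum_le_sum fun i _ => ?_
  calc Real.sqrt (lam i) = Real.sqrt (Real.sqrt (lam i)) * Real.sqrt (Real.sqrt (lam i)) :=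
        (Real.mul_self_sqrt (Real.sqrt_nonneg _)).symm
    _ ≤ Real.sqrt (Real.sqrt (lam i)) * C :=
        mul_le_mul_of_nonneg_left (hkey i) (Real.sqrt_nonneg _)
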